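/- Let ‖·‖_γ be a differentiable monotonic norm on ℝ^n with gradient map J_γ(x) = ∇‖x‖_γ for x ≠ 0 and J_γ(0) = 0. Then ‖·‖_γ is strongly monotonic if and only if for every x ∈ ℝ^n_+, x and J_γ(x) are comparable (i.e., there exist c, C > 0 with c·x ≤ J_γ(x) ≤ C·x entrywise). -/

import Mathlib

/-- Comparability in the cone order: `∃ c C > 0, c y ≤ x ≤ C y`. -/
def Comp {n : ℕ} (x y : Fin n → ℝ) : Prop :=
  ∃ c C : ℝ, 0 < c ∧ 0 < C ∧ (∀ i, c * y i ≤ x i) ∧ (∀ i, x i ≤ C * y i)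

theorem stmt4 {n : ℕ} (N : (Fin n → ℝ) → ℝ)
    (hhom : ∀ (c : ℝ) (x : Fin n → ℝ), N (c • x) = |c| * N x)
    (htri : ∀ x y : Fin n → ℝ, N (x + y) ≤ N x + N y)
    (hdef : ∀ x : Fin n → ℝ, N x = 0 ↔ x = 0)
    (hmono : ∀ x y : Fin n → ℝ, (∀ i, |x i| ≤ |y i|) → N x ≤ N y)
    -- `J x` is the gradient of `N` at every `x ≠ 0`, and `J 0 = 0`
    (J : (Fin n → ℝ) → (Fin n → ℝ)) (hJ0 : J 0 = 0)
    (hJ : ∀ x : Fin n → ℝ, x ≠ 0 → HasFDerivAt N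
      (∑ i : Fin n, J x i • ContinuousLinearMap.proj (R := ℝ) (φ := fun _ : Fin n => ℝ) i) x) :
    (∀ x y : Fin n → ℝ, (∀ i, |x i| ≤ |y i|) →
        (fun i => |x i|) ≠ (fun i => |y i|) → N x < N y)
      ↔ (∀ x : Fin n → ℝ, (∀ i, 0 ≤ x i) → Comp (J x) x) := by
  classical
  have hN0 : N 0 = 0 := (hdef 0).2 rfl
  have habs : ∀ x : Fin n → ℝ, N (fun i => |x i|) = N x := by
    intro x
    refine le_antisymm (hmono _ _ ?_) (hmono _ _ ?_) <;> intro i <;> simp [abs_abs]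
  have hconv : ConvexOn ℝ Set.univ N := by
    refine ⟨convex_univ, ?_⟩
    intro a _ b _ θ τ hθ hτ hθτ
    calc N (θ • a + τ • b) ≤ N (θ • a) + N (τ • b) := htri _ _
      _ = θ * N a + τ * N b := by rw [hhom, hhom, abs_of_nonneg hθ, abs_of_nonneg hτ]
      _ = θ • N a + τ • N b := rfl
  -- derivative of t ↦ N (x + t • v)
  have hphi : ∀ (x v : Fin n → ℝ) (t : ℝ), x + t • v ≠ 0 →
      HasDerivAt (fun s : ℝ => N (x + s • v)) (∑ i, J (x + t • v) i * v i) t := by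
    intro x v t hz
    have hline : HasDerivAt (fun s : ℝ => x + s • v) v t := by
      simpa using ((hasDerivAt_id t).smul_const v).const_add x
    have := (hJ _ hz).comp_hasDerivAt t hline
    simp at this
    exact this
  -- convexity of t ↦ N (x + t • v)
  have hphiconv : ∀ (x v : Fin n → ℝ), ConvexOn ℝ Set.univ (fun s : ℝ => N (x + s • v)) := by
    intro x v
    have := hconv.comp_affineMap (AffineMap.lineMap (x : Fin n → ℝ) (x + v))
    have heq : (N ∘ (AffineMap.lineMap (x : Fin n → ℝ) (x + v))) =
        (fun s : ℝ => N (x + s • v)) := by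
      funext s
      simp [AffineMap.lineMap_apply, add_comm]
    rw [heq] at this
    simpa using this
  constructor
  · -- strong monotonicity → comparability
    intro hSM x hx
    by_cases hx0 : x = 0
    · subst hx0
      exact ⟨1, 1, one_pos, one_pos, by simp [hJ0], by simp [hJ0]⟩
    · have hzero : ∀ i, x i = 0 → J x i = 0 := by
        intro i hi
        set e : Fin n → ℝ := Pi.single i 1 with he
        have hg : HasDerivAt (fun s : ℝ => N (x + s • e)) (J x i) 0 := by
          have h0 : x + (0:ℝ) • e = x := by simp
          have := hphi x e 0 (by simpa [h0] using hx0)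
          rw [h0] at this
          simpa [he, Pi.single_apply, mul_ite] using this
        have heven : ∀ t : ℝ, N (x + (-t) • e) = N (x + t • e) := by
          intro t
          refine le_antisymm (hmono _ _ ?_) (hmono _ _ ?_) <;> intro j <;>
            by_cases hj : j = i <;>
            simp [he, Pi.single_apply, hj, hi, abs_neg]
        have h2 : HasDerivAt (fun t : ℝ => N (x + (-t) • e)) (J x i * (-1)) 0 := by
          have hneg : HasDerivAt (fun t : ℝ => -t) (-1 : ℝ) 0 := hasDerivAt_neg 0
          have hg' : HasDerivAt (fun s : ℝ => N (x + s • e)) (J x i) ((fun t : ℝ => -t) 0) := by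
            simpa using hg
          exact hg'.comp 0 hneg
        have h2' : HasDerivAt (fun t : ℝ => N (x + t • e)) (-(J x i)) 0 := by
          have : (fun t : ℝ => N (x + (-t) • e)) = (fun t : ℝ => N (x + t • e)) := by
            funext t; exact heven t
          rw [this] at h2
          simpa using h2
        have := hg.unique h2'
        linarith
      have hpos : ∀ i, 0 < x i → 0 < J x i := by
        intro i hi
        set v : Fin n → ℝ := fun j => if j = i then -(x i) else 0 with hv
        have hd : HasDerivAt (fun s : ℝ => N (x + s • v)) (-(x i) * J x i) 0 := by
          have h0 : x + (0:ℝ) • v = x := by simp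
          have := hphi x v 0 (by simpa [h0] using hx0)
          rw [h0] at this
          have hsum : (∑ j, J x j * v j) = -(x i) * J x i := by
            rw [Finset.sum_eq_single i]
            · simp [hv]; ring
            · intro j _ hj; simp [hv, hj]
            · simp
          rwa [hsum] at this
        have hslope : -(x i) * J x i ≤ N (x + (1:ℝ) • v) - N x := by
          have := (hphiconv x v).le_slope_of_hasDerivAt (Set.mem_univ 0) (Set.mem_univ 1)
            zero_lt_one hd
          simpa [slope_def_field] using this
        have hlt : N (x + (1:ℝ) • v) < N x := by
          refine hSM _ _ ?_ ?_
          · intro j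
            by_cases hj : j = i <;>
              simp [hv, hj, abs_nonneg]
          · intro hcontra
            have := congrFun hcontra i
            simp [hv, abs_of_nonneg (hx i)] at this
            exact absurd this hi.ne
        nlinarith
      obtain ⟨i0, hi0⟩ : ∃ i, x i ≠ 0 := Function.ne_iff.mp hx0
      haveI : Nonempty (Fin n) := ⟨i0⟩
      set f : Fin n → ℝ := fun i => if x i = 0 then 1 else J x i / x i with hf
      have hxpos : ∀ i, x i ≠ 0 → 0 < x i := fun i h => lt_of_le_of_ne (hx i) (Ne.symm h)
      have hfpos : ∀ i, 0 < f i := by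
        intro i
        by_cases h : x i = 0
        · simp [hf, h]
        · simp only [hf, h, if_false]
          exact div_pos (hpos i (hxpos i h)) (hxpos i h)
      refine ⟨Finset.univ.inf' Finset.univ_nonempty f, Finset.univ.sup' Finset.univ_nonempty f,
        ?_, ?_, ?_, ?_⟩
      · exact (Finset.lt_inf'_iff _).2 fun i _ => hfpos i
      · exact lt_of_lt_of_le (hfpos i0) (Finset.le_sup' f (Finset.mem_univ i0))
      · intro i
        by_cases h : x i = 0
        · simp [h, hzero i h]
        · have h1 : Finset.univ.inf' Finset.univ_nonempty f ≤ f i :=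
            Finset.inf'_le f (Finset.mem_univ i)
          have h2 : f i * x i = J x i := by
            simp only [hf, h, if_false]
            exact div_mul_cancel₀ _ h
          calc Finset.univ.inf' Finset.univ_nonempty f * x i ≤ f i * x i :=
                mul_le_mul_of_nonneg_right h1 (hx i)
            _ = J x i := h2
      · intro i
        by_cases h : x i = 0
        · simp [h, hzero i h]
        · have h1 : f i ≤ Finset.univ.sup' Finset.univ_nonempty f :=
            Finset.le_sup' f (Finset.mem_univ i)
          have h2 : f i * x i = J x i := by
            simp only [hf, h, if_false]
            exact div_mul_cancel₀ _ h
          calc J x i = f i * x i := h2.symm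
            _ ≤ Finset.univ.sup' Finset.univ_nonempty f * x i :=
                mul_le_mul_of_nonneg_right h1 (hx i)
  · -- comparability → strong monotonicity
    intro hC
    have key : ∀ x y : Fin n → ℝ, (∀ i, 0 ≤ x i) → (∀ i, x i ≤ y i) → x ≠ y → N x < N y := by
      intro x y hx hxy hne
      by_cases hx0 : x = 0
      · subst hx0
        have hy0 : y ≠ 0 := fun h => hne (by rw [h])
        have hNy : N y ≠ 0 := fun h => hy0 ((hdef y).1 h)
        have hNynn : 0 ≤ N y := by
          have h1 : N (-y) = N y := by
            have := hhom (-1) y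
            simpa using this
          have h2 : (0:ℝ) ≤ N y + N (-y) := by
            have := htri y (-y)
            simpa [hN0] using this
          linarith
        rw [hN0]
        exact lt_of_le_of_ne hNynn (Ne.symm hNy)
      · set v : Fin n → ℝ := y - x with hv
        have hvnn : ∀ i, 0 ≤ v i := fun i => by simp [hv, hxy i]
        obtain ⟨i0, hvi0⟩ : ∃ i, v i ≠ 0 := by
          by_contra h
          push_neg at h
          exact hne (by funext i; have := h i; simp [hv, sub_eq_zero] at this; exact this.symm)
        have hvi0' : 0 < v i0 := lt_of_le_of_ne (hvnn i0) (Ne.symm hvi0)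
        obtain ⟨j0, hj0⟩ : ∃ j, x j ≠ 0 := Function.ne_iff.mp hx0
        have hxj0 : 0 < x j0 := lt_of_le_of_ne (hx j0) (Ne.symm hj0)
        have hzne : ∀ t : ℝ, t ∈ Set.Icc (0:ℝ) 1 → x + t • v ≠ 0 := by
          intro t ht h
          have := congrFun h j0
          simp only [Pi.add_apply, Pi.smul_apply, smul_eq_mul, Pi.zero_apply] at this
          nlinarith [mul_nonneg ht.1 (hvnn j0)]
        set φ : ℝ → ℝ := fun s => N (x + s • v) with hφ
        have hd : ∀ t ∈ Set.Icc (0:ℝ) 1,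
            HasDerivAt φ (∑ i, J (x + t • v) i * v i) t :=
          fun t ht => hphi x v t (hzne t ht)
        have hcont : ContinuousOn φ (Set.Icc 0 1) := fun t ht =>
          ((hd t ht).differentiableAt.continuousAt).continuousWithinAt
        have hder : ∀ t ∈ interior (Set.Icc (0:ℝ) 1), 0 < deriv φ t := by
          rw [interior_Icc]
          intro t ht
          have htI : t ∈ Set.Icc (0:ℝ) 1 := ⟨ht.1.le, ht.2.le⟩
          rw [(hd t htI).deriv]
          set z : Fin n → ℝ := x + t • v with hz
          have hznn : ∀ i, 0 ≤ z i := fun i => by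
            simp only [hz, Pi.add_apply, Pi.smul_apply, smul_eq_mul]
            exact add_nonneg (hx i) (mul_nonneg ht.1.le (hvnn i))
          obtain ⟨c, C, hc, hC', hlow, hup⟩ := hC z hznn
          refine Finset.sum_pos' ?_ ⟨i0, Finset.mem_univ _, ?_⟩
          · intro i _
            exact mul_nonneg (le_trans (mul_nonneg hc.le (hznn i)) (hlow i)) (hvnn i)
          · have hzi0 : 0 < z i0 := by
              simp only [hz, Pi.add_apply, Pi.smul_apply, smul_eq_mul]
              nlinarith [mul_pos ht.1 hvi0', hx i0]
            exact mul_pos (lt_of_lt_of_le (mul_pos hc hzi0) (hlow i0)) hvi0'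
        have hsm := strictMonoOn_of_deriv_pos (convex_Icc 0 1) hcont hder
          (Set.left_mem_Icc.2 zero_le_one) (Set.right_mem_Icc.2 zero_le_one) zero_lt_one
        have h0 : φ 0 = N x := by simp [hφ]
        have h1 : φ 1 = N y := by simp [hφ, hv]
        rw [← h0, ← h1]
        exact hsm
    intro x y hxy hne
    rw [← habs x, ← habs y]
    exact key _ _ (fun i => abs_nonneg _) hxy hne
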